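/- In the connected component of 0 of G(ℚⁿ, q), for any two vertices a, b and k ≥ 1, the number of paths of length k from a to b equals 1 if and only if q(a − b) = k². -/

import Mathlib

open QuadraticMap Finset

section Aux

variable {n : ℕ} {q : QuadraticForm ℚ (Fin n → ℚ)}

lemma aux_q_sub (x y : Fin n → ℚ) : q (x - y) = q x + q y - polar q x y := by
  have h : polar q x (-y) = q (x + -y) - q x - q (-y) := rfl
  rw [polar_neg_right] at h
  rw [sub_eq_add_neg, QuadraticMap.map_neg] at *
  linarith [h]

lemma aux_q_add (x y : Fin n → ℚ) : q (x + y) = q x + q y + polar q x y := by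
  have h : polar q x y = q (x + y) - q x - q y := rfl
  linarith [h]

lemma aux_polar_le_two (hq : q.PosDef) {x y : Fin n → ℚ} (hx : q x = 1) (hy : q y = 1) :
    polar q x y ≤ 2 := by
  have := hq.nonneg (x - y)
  rw [aux_q_sub, hx, hy] at this; linarith

lemma aux_polar_eq_two (hq : q.PosDef) {x y : Fin n → ℚ} (hx : q x = 1) (hy : q y = 1)
    (h : polar q x y = 2) : x = y := by
  have h0 : q (x - y) = 0 := by rw [aux_q_sub, hx, hy, h]; ring
  have := hq.anisotropic _ h0
  exact sub_eq_zero.mp this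

lemma aux_polar_sum_left (s : Finset ι) (f : ι → (Fin n → ℚ)) (t : Fin n → ℚ) :
    polar q (∑ i ∈ s, f i) t = ∑ i ∈ s, polar q (f i) t := by
  classical
  induction s using Finset.induction with
  | empty => simp [polar_zero_left]
  | insert _ _ h ih => rw [Finset.sum_insert h, Finset.sum_insert h, polar_add_left, ih]

/-- Key lemma: a sum of `m` unit vectors has `q`-value at most `m²`, with equality
iff all the vectors are equal. -/
lemma aux_key (hq : q.PosDef) :
    ∀ (m : ℕ) (s : Fin m → (Fin n → ℚ)), (∀ i, q (s i) = 1) →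
      q (∑ i, s i) ≤ (m : ℚ) ^ 2 ∧ (q (∑ i, s i) = (m : ℚ) ^ 2 → ∀ i j, s i = s j) := by
  intro m
  induction m with
  | zero =>
    intro s _
    refine ⟨by simp [hq.anisotropic], by intro _ i; exact absurd i.2 (by omega)⟩
  | succ m ih =>
    intro s hs
    have hsum : ∑ i : Fin (m + 1), s i
        = (∑ i : Fin m, s i.castSucc) + s (Fin.last m) := Fin.sum_univ_castSucc s
    set S : Fin n → ℚ := ∑ i : Fin m, s i.castSucc with hS
    set t : Fin n → ℚ := s (Fin.last m) with ht
    obtain ⟨hle, heq⟩ := ih (fun i => s i.castSucc) (fun i => hs _)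
    have hpol : polar q S t = ∑ i : Fin m, polar q (s i.castSucc) t :=
      aux_polar_sum_left Finset.univ _ t
    have hpolle : ∀ i : Fin m, polar q (s i.castSucc) t ≤ 2 := fun i =>
      aux_polar_le_two hq (hs _) (hs _)
    have hpolsum : polar q S t ≤ 2 * m := by
      rw [hpol]
      calc ∑ i : Fin m, polar q (s i.castSucc) t ≤ ∑ _i : Fin m, (2 : ℚ) :=
            Finset.sum_le_sum fun i _ => hpolle i
        _ = 2 * m := by simp [mul_comm]
    have hqadd : q (∑ i : Fin (m + 1), s i) = q S + q t + polar q S t := by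
      rw [hsum, aux_q_add]
    constructor
    · rw [hqadd, hs (Fin.last m)]
      push_cast
      nlinarith [hle, hpolsum]
    · intro hqe
      have hqS : q S = (m : ℚ) ^ 2 ∧ polar q S t = 2 * m := by
        rw [hqadd, hs (Fin.last m)] at hqe
        push_cast at hqe ⊢
        constructor <;> nlinarith [hle, hpolsum]
      have hall : ∀ i : Fin m, polar q (s i.castSucc) t = 2 := by
        have hsum2 : ∑ i : Fin m, polar q (s i.castSucc) t = ∑ _i : Fin m, (2 : ℚ) := by
          rw [← hpol, hqS.2]; simp [mul_comm]
        have h := (Finset.sum_eq_sum_iff_of_le (fun i _ => hpolle i)).mp hsum2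
        exact fun i => h i (Finset.mem_univ i)
      have hcast : ∀ i : Fin m, s i.castSucc = t := fun i =>
        aux_polar_eq_two hq (hs _) (hs _) (hall i)
      have hlast : ∀ i : Fin (m + 1), s i = t := by
        intro i
        rcases Fin.eq_castSucc_or_eq_last i with ⟨j, rfl⟩ | rfl
        · exact hcast j
        · rfl
      intro i j; rw [hlast i, hlast j]

lemma aux_tele {V : Type*} [AddCommGroup V] :
    ∀ {k : ℕ} (f : Fin (k + 1) → V),
      ∑ i : Fin k, (f i.succ - f i.castSucc) = f (Fin.last k) - f 0 := by
  intro k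
  induction k with
  | zero => intro f; simp [Fin.last]
  | succ k ih =>
    intro f
    rw [Fin.sum_univ_castSucc]
    simp only [Fin.succ_castSucc]
    have h := ih (fun j => f j.castSucc)
    rw [h, Fin.succ_last, Fin.castSucc_zero]
    abel

end Aux

/-- The unit-distance graph of a rational quadratic form `q` on `ℚⁿ`:
vertices are `ℚⁿ` and `x ~ y` iff `q (x - y) = 1`. -/
def distGraph {n : ℕ} (q : QuadraticForm ℚ (Fin n → ℚ)) : SimpleGraph (Fin n → ℚ) where
  Adj x y := q (x - y) = 1
  symm := ⟨fun x y (h : q (x - y) = 1) => show q (y - x) = 1 by rwa [QuadraticMap.map_sub] at h⟩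
  loopless := ⟨fun x (h : q (x - x) = 1) => by simp [sub_self] at h⟩

/-- In the connected component of `0` of `G(ℚⁿ, q)`, for vertices `a, b` and `k ≥ 1`,
the number of paths of length `k` from `a` to `b` is `1` iff `q (a - b) = k²`. -/
theorem stmt_12 {n : ℕ} (q : QuadraticForm ℚ (Fin n → ℚ)) (hq : q.PosDef)
    (a b : Fin n → ℚ) (ha : (distGraph q).Reachable 0 a)
    (hb : (distGraph q).Reachable 0 b) (k : ℕ) (hk : 1 ≤ k) :
    Nat.card {f : Fin (k + 1) → (Fin n → ℚ) //
        f 0 = a ∧ f (Fin.last k) = b ∧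
        ∀ i : Fin k, q (f i.succ - f i.castSucc) = 1} = 1 ↔
      q (a - b) = (k : ℚ) ^ 2 := by
  classical
  have hk0 : (k : ℚ) ≠ 0 := Nat.cast_ne_zero.mpr (by omega)
  constructor
  · intro hcard
    have h0k : 0 < k := hk
    obtain ⟨⟨f, hf⟩, huniq⟩ := Nat.card_eq_one_iff_exists.mp hcard
    have hf0 : f 0 = a := hf.1
    have hfl : f (Fin.last k) = b := hf.2.1
    have hfs : ∀ i : Fin k, q (f i.succ - f i.castSucc) = 1 := hf.2.2
    have hsum : ∑ i : Fin k, (f i.succ - f i.castSucc) = b - a := by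
      rw [aux_tele f, hfl, hf0]
    have hadj : ∀ (i : ℕ) (h : i + 1 < k),
        f (⟨i + 1, Nat.lt_succ_of_lt h⟩ : Fin (k + 1))
            - f ⟨i, Nat.lt_succ_of_lt (Nat.lt_of_succ_lt h)⟩
          = f ⟨i + 2, Nat.succ_lt_succ h⟩ - f ⟨i + 1, Nat.lt_succ_of_lt h⟩ := by
      intro i hi
      by_contra hne
      have pi0 : i < k + 1 := Nat.lt_succ_of_lt (Nat.lt_of_succ_lt hi)
      have pi1 : i + 1 < k + 1 := Nat.lt_succ_of_lt hi
      have pi2 : i + 2 < k + 1 := Nat.succ_lt_succ hi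
      set v : Fin n → ℚ := f ⟨i, pi0⟩ + (f ⟨i + 2, pi2⟩ - f ⟨i + 1, pi1⟩) with hv
      set g : Fin (k + 1) → (Fin n → ℚ) := Function.update f ⟨i + 1, pi1⟩ v with hg
      have hgp : g ⟨i + 1, pi1⟩ = v := Function.update_self _ _ _
      have hgne : ∀ j : Fin (k + 1), j.val ≠ i + 1 → g j = f j := by
        intro j hj
        exact Function.update_of_ne (by simp [Fin.ext_iff, hj]) _ _
      have hg0 : g 0 = a := by
        rw [hgne 0 (Nat.ne_of_lt (Nat.succ_pos i)), hf0]
      have hgl : g (Fin.last k) = b := by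
        rw [hgne _ (by simp only [Fin.val_last]; exact (Nat.ne_of_lt hi).symm), hfl]
      have hgs : ∀ j : Fin k, q (g j.succ - g j.castSucc) = 1 := by
        intro j
        have hjs : (j.succ : Fin (k + 1)).val = j.val + 1 := rfl
        have hjc : (j.castSucc : Fin (k + 1)).val = j.val := rfl
        rcases eq_or_ne j.val i with hji | hji
        · have h1 : g j.succ = v := by
            rw [show j.succ = (⟨i + 1, pi1⟩ : Fin (k + 1)) from
              Fin.ext (show (j.succ).val = i + 1 by rw [hjs, hji])]
            exact hgp
          have h2 : g j.castSucc = f ⟨i, pi0⟩ := by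
            rw [show j.castSucc = (⟨i, pi0⟩ : Fin (k + 1)) from
              Fin.ext (show (j.castSucc).val = i by rw [hjc, hji])]
            exact hgne _ (Nat.ne_of_lt (Nat.lt_succ_self i))
          rw [h1, h2]
          have h3 : v - f ⟨i, pi0⟩ = f ⟨i + 2, pi2⟩ - f ⟨i + 1, pi1⟩ := by rw [hv]; abel
          rw [h3]
          exact hfs ⟨i + 1, hi⟩
        · rcases eq_or_ne j.val (i + 1) with hji2 | hji2
          · have h1 : g j.succ = f ⟨i + 2, pi2⟩ := by
              rw [show j.succ = (⟨i + 2, pi2⟩ : Fin (k + 1)) from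
                Fin.ext (show (j.succ).val = i + 2 by rw [hjs, hji2])]
              exact hgne _ (Nat.ne_of_gt (Nat.lt_succ_self (i + 1)))
            have h2 : g j.castSucc = v := by
              rw [show j.castSucc = (⟨i + 1, pi1⟩ : Fin (k + 1)) from
                Fin.ext (show (j.castSucc).val = i + 1 by rw [hjc, hji2])]
              exact hgp
            rw [h1, h2, hv]
            have h3 : f ⟨i + 2, pi2⟩ - (f ⟨i, pi0⟩ + (f ⟨i + 2, pi2⟩ - f ⟨i + 1, pi1⟩))
                = f ⟨i + 1, pi1⟩ - f ⟨i, pi0⟩ := by abel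
            rw [h3]
            exact hfs ⟨i, Nat.lt_of_succ_lt hi⟩
          · have h1 : g j.succ = f j.succ :=
              hgne _ (fun h => hji (Nat.succ_injective h))
            have h2 : g j.castSucc = f j.castSucc := hgne _ hji2
            rw [h1, h2]
            exact hfs j
      have heq : (⟨g, hg0, hgl, hgs⟩ : {f : Fin (k + 1) → (Fin n → ℚ) //
            f 0 = a ∧ f (Fin.last k) = b ∧
            ∀ i : Fin k, q (f i.succ - f i.castSucc) = 1})
          = ⟨f, hf⟩ := (huniq _).trans (huniq _).symm
      have hgf : g = f := congrArg Subtype.val heq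
      apply hne
      have hvp : v = f ⟨i + 1, pi1⟩ := by rw [← hgp, hgf]
      rw [hv] at hvp
      linear_combination -hvp
    have hstep : ∀ (j : ℕ) (hj : j < k),
        f (⟨j + 1, Nat.succ_lt_succ hj⟩ : Fin (k + 1)) - f ⟨j, Nat.lt_succ_of_lt hj⟩
          = f ⟨1, Nat.succ_lt_succ h0k⟩ - f ⟨0, Nat.succ_pos k⟩ := by
      intro j
      induction j with
      | zero => intro _; rfl
      | succ m ihm =>
        intro hj
        linear_combination ihm (Nat.lt_of_succ_lt hj) - hadj m hj
    have hconst : ∀ j : Fin k, f j.succ - f j.castSucc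
        = f (⟨1, Nat.succ_lt_succ h0k⟩ : Fin (k + 1)) - f ⟨0, Nat.succ_pos k⟩ :=
      fun j => hstep j.val j.2
    have hsc : b - a
        = (k : ℚ) • (f (⟨1, Nat.succ_lt_succ h0k⟩ : Fin (k + 1)) - f ⟨0, Nat.succ_pos k⟩) := by
      rw [← hsum, Finset.sum_congr rfl fun j _ => hconst j, Finset.sum_const,
        Finset.card_univ, Fintype.card_fin, ← Nat.cast_smul_eq_nsmul ℚ]
    have hqc : q (f (⟨1, Nat.succ_lt_succ h0k⟩ : Fin (k + 1)) - f ⟨0, Nat.succ_pos k⟩) = 1 :=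
      hfs ⟨0, h0k⟩
    have hfin : q (b - a) = (k : ℚ) ^ 2 := by
      rw [hsc, QuadraticMap.map_smul, hqc, smul_eq_mul]; ring
    rw [QuadraticMap.map_sub]
    exact hfin
  · intro hab
    have hqba : q (b - a) = (k : ℚ) ^ 2 := by rw [QuadraticMap.map_sub]; exact hab
    set c : Fin n → ℚ := (k : ℚ)⁻¹ • (b - a) with hc
    have hqc : q c = 1 := by
      rw [hc, QuadraticMap.map_smul, hqba, smul_eq_mul]
      field_simp
    have hkc : (k : ℚ) • c = b - a := by
      rw [hc, smul_smul, mul_inv_cancel₀ hk0, one_smul]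
    set g : Fin (k + 1) → (Fin n → ℚ) := fun j => a + (j.val : ℚ) • c with hg
    have hg0 : g 0 = a := by simp [hg]
    have hgl : g (Fin.last k) = b := by
      simp only [hg, Fin.val_last, hkc]
      abel
    have hgs : ∀ j : Fin k, q (g j.succ - g j.castSucc) = 1 := by
      intro j
      have hstep : g j.succ - g j.castSucc = c := by
        simp only [hg, Fin.val_succ, Fin.coe_castSucc]
        push_cast
        rw [add_smul, one_smul]
        abel
      rw [hstep, hqc]
    refine Nat.card_eq_one_iff_exists.mpr ⟨⟨g, hg0, hgl, hgs⟩, ?_⟩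
    rintro ⟨f, hf⟩
    have hf0 : f 0 = a := hf.1
    have hfl : f (Fin.last k) = b := hf.2.1
    have hfs : ∀ i : Fin k, q (f i.succ - f i.castSucc) = 1 := hf.2.2
    have hsum : ∑ i : Fin k, (f i.succ - f i.castSucc) = b - a := by
      rw [aux_tele f, hfl, hf0]
    have h0k : 0 < k := by omega
    have hq2 : q (∑ i : Fin k, (f i.succ - f i.castSucc)) = (k : ℚ) ^ 2 := by
      rw [hsum]; exact hqba
    have hkey := (aux_key hq k (fun i => f i.succ - f i.castSucc) hfs).2 hq2
    have hsmul : (k : ℚ) • (f (⟨0, h0k⟩ : Fin k).succ - f (⟨0, h0k⟩ : Fin k).castSucc)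
        = b - a := by
      rw [← hsum, Finset.sum_congr rfl (fun j _ => hkey j ⟨0, h0k⟩), Finset.sum_const,
        Finset.card_univ, Fintype.card_fin, ← Nat.cast_smul_eq_nsmul ℚ]
    have hs0c : f (⟨0, h0k⟩ : Fin k).succ - f (⟨0, h0k⟩ : Fin k).castSucc = c :=
      smul_right_injective (Fin n → ℚ) hk0 (hsmul.trans hkc.symm)
    have hfg : ∀ (m : ℕ) (hm : m < k + 1), f ⟨m, hm⟩ = a + (m : ℚ) • c := by
      intro m
      induction m with
      | zero => intro _; simpa using hf0
      | succ m ihm =>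
        intro hm
        have hmk : m < k := by omega
        have hstep : f ⟨m + 1, hm⟩ - f ⟨m, by omega⟩ = c := by
          have h5 := hkey ⟨m, hmk⟩ ⟨0, h0k⟩
          rw [hs0c] at h5
          exact h5
        have h6 : f ⟨m + 1, hm⟩ = f ⟨m, by omega⟩ + c := by
          rw [← hstep]; abel
        rw [h6, ihm (by omega)]
        push_cast
        rw [add_smul, one_smul]
        abel
    apply Subtype.ext
    funext j
    obtain ⟨m, hm⟩ := j
    show f ⟨m, hm⟩ = g ⟨m, hm⟩
    rw [hfg m hm]
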